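/- In the complexified Clifford algebra of ℝ^{2l} (with e_i² = -1), the supertrace of a basis monomial e_{i_1} e_{i_2} ⋯ e_{i_k} (i_1 < ⋯ < i_k) in the spinor representation vanishes unless k = 2l, and Str(e_1 e_2 ⋯ e_{2l}) = (-2i)^l (up to the standard sign convention); equivalently, Str(a) = (-2i)^l · T(σ(a)) where σ is the symbol map and T the Berezin integral. -/

import Mathlib

open scoped TensorProduct

set_option maxHeartbeats 1000000

/-- Realize the complexified Clifford algebra `Cl(ℝ^{2l}) ⊗ ℂ`
(generators `e_i` with `e_i² = -1`, `e_i e_j = -e_j e_i`) as the endomorphism algebra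
of the `2^l`-dimensional spinor space `S` via an algebra isomorphism `ρ`, and let
`Γ = i^l e_1 ⋯ e_{2l}` be the chirality element, `Str(a) = tr(Γ a)` the supertrace.
Then the supertrace of a strictly increasing basis monomial `e_{i_1} ⋯ e_{i_k}`
vanishes unless `k = 2l`, and `Str(e_1 e_2 ⋯ e_{2l}) = (-2i)^l`. -/
theorem spinor_supertrace_monomials
    {V : Type*} [AddCommGroup V] [Module ℝ V] [FiniteDimensional ℝ V]
    (Q : QuadraticForm ℝ V) (l : ℕ)
    (hdim : Module.finrank ℝ V = 2 * l)
    (e : Fin (2 * l) → V)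
    (hQ : ∀ i, Q (e i) = -1)
    (hpolar : ∀ i j, i ≠ j → QuadraticMap.polar Q (e i) (e j) = 0)
    (hspan : Submodule.span ℝ (Set.range e) = ⊤)
    -- the spinor module `S`, of dimension `2^l`, and the spinor representation `ρ`:
    (S : Type*) [AddCommGroup S] [Module ℂ S] [FiniteDimensional ℂ S]
    (hS : Module.finrank ℂ S = 2 ^ l)
    (ρ : (ℂ ⊗[ℝ] CliffordAlgebra Q) ≃ₐ[ℂ] Module.End ℂ S)
    -- the chirality element and the supertrace:
    (Γ : ℂ ⊗[ℝ] CliffordAlgebra Q)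
    (hΓ : Γ = (Complex.I ^ l) •
      ((1 : ℂ) ⊗ₜ[ℝ] (List.ofFn fun i => CliffordAlgebra.ι Q (e i)).prod))
    (Str : (ℂ ⊗[ℝ] CliffordAlgebra Q) → ℂ)
    (hStr : ∀ a, Str a = LinearMap.trace ℂ S (ρ (Γ * a))) :
    -- the supertrace of a strictly increasing monomial of length `k < 2l` vanishes:
    (∀ (k : ℕ) (f : Fin k → Fin (2 * l)), StrictMono f → k < 2 * l →
      Str ((1 : ℂ) ⊗ₜ[ℝ] (List.ofFn fun j => CliffordAlgebra.ι Q (e (f j))).prod) = 0) ∧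
    -- while the top monomial has supertrace `(-2i)^l`:
    Str ((1 : ℂ) ⊗ₜ[ℝ] (List.ofFn fun i => CliffordAlgebra.ι Q (e i)).prod)
      = (-2 * Complex.I) ^ l := by
  classical
  set g : Fin (2 * l) → (ℂ ⊗[ℝ] CliffordAlgebra Q) :=
    fun i => (1 : ℂ) ⊗ₜ[ℝ] CliffordAlgebra.ι Q (e i) with hg
  -- local specialized ring/module lemmas (to avoid instance-path `rw` failures)
  have massoc : ∀ x y z : ℂ ⊗[ℝ] CliffordAlgebra Q, x * y * z = x * (y * z) :=
    fun x y z => mul_assoc x y z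
  have nm1 : ∀ x : ℂ ⊗[ℝ] CliffordAlgebra Q, (-1 : ℂ ⊗[ℝ] CliffordAlgebra Q) * x = -x :=
    fun x => neg_one_mul x
  have mn1 : ∀ x : ℂ ⊗[ℝ] CliffordAlgebra Q, x * (-1 : ℂ ⊗[ℝ] CliffordAlgebra Q) = -x :=
    fun x => mul_neg_one x
  have nmul : ∀ x y : ℂ ⊗[ℝ] CliffordAlgebra Q, -x * y = -(x * y) :=
    fun x y => neg_mul x y
  have smulmul : ∀ (c : ℂ) (x y : ℂ ⊗[ℝ] CliffordAlgebra Q), (c • x) * y = c • (x * y) :=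
    fun c x y => smul_mul_assoc c x y
  have mulsmul : ∀ (c : ℂ) (x y : ℂ ⊗[ℝ] CliffordAlgebra Q), x * (c • y) = c • (x * y) :=
    fun c x y => mul_smul_comm c x y
  have ssmul : ∀ (c d : ℂ) (x : ℂ ⊗[ℝ] CliffordAlgebra Q), c • d • x = (c * d) • x :=
    fun c d x => smul_smul c d x
  have osmul : ∀ x : ℂ ⊗[ℝ] CliffordAlgebra Q, (1 : ℂ) • x = x := fun x => one_smul ℂ x
  have nsmul1 : ∀ x : ℂ ⊗[ℝ] CliffordAlgebra Q, (-1 : ℂ) • x = -x :=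
    fun x => neg_one_smul ℂ x
  have smneg : ∀ (c : ℂ) (x : ℂ ⊗[ℝ] CliffordAlgebra Q), c • -x = -(c • x) :=
    fun c x => smul_neg c x
  have negsmul : ∀ (c : ℂ) (x : ℂ ⊗[ℝ] CliffordAlgebra Q), (-c) • x = -(c • x) :=
    fun c x => neg_smul c x
  -- e_i ^ 2 = -1
  have gsq : ∀ i, g i * g i = -1 := by
    intro i
    simp only [hg]
    rw [Algebra.TensorProduct.tmul_mul_tmul, one_mul, CliffordAlgebra.ι_sq_scalar, hQ,
      map_neg, map_one, TensorProduct.tmul_neg, ← Algebra.TensorProduct.one_def]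
  -- anticommutation
  have ganti : ∀ i j, i ≠ j → g i * g j = -(g j * g i) := by
    intro i j hij
    have h0 := CliffordAlgebra.ι_mul_ι_add_swap (Q := Q) (e i) (e j)
    rw [hpolar i j hij, map_zero] at h0
    have h1 : CliffordAlgebra.ι Q (e i) * CliffordAlgebra.ι Q (e j)
        = -(CliffordAlgebra.ι Q (e j) * CliffordAlgebra.ι Q (e i)) :=
      eq_neg_of_add_eq_zero_left h0
    simp only [hg]
    rw [Algebra.TensorProduct.tmul_mul_tmul, one_mul, h1, TensorProduct.tmul_neg,
      Algebra.TensorProduct.tmul_mul_tmul, one_mul]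
  -- moving a generator through a product of generators
  have comm : ∀ (i : Fin (2 * l)) (L : List (Fin (2 * l))),
      g i * (L.map g).prod
        = ((-1 : ℂ) ^ (L.countP (fun j => decide (j ≠ i)))) • ((L.map g).prod * g i) := by
    intro i L
    induction L with
    | nil => simp
    | cons j L ih =>
      by_cases hji : j = i
      · subst hji
        rw [List.map_cons, List.prod_cons, List.countP_cons_of_neg (p := fun k => decide (k ≠ j)) (a := j) (l := L) (by simp),
          ← massoc, gsq j, nm1, ih, smulmul, ssmul, ← pow_add, massoc, gsq j, mn1,
          Even.neg_one_pow ⟨_, rfl⟩, osmul]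
      · rw [List.map_cons, List.prod_cons, List.countP_cons_of_pos (p := fun k => decide (k ≠ i)) (a := j) (l := L) (by simp [hji]),
          ← massoc, ganti i j (fun h => hji h.symm), nmul, massoc, ih, mulsmul, ← massoc,
          pow_succ, mul_neg_one, negsmul]
  -- 1 ⊗ (product of ι's) equals product of g's
  have tmulProd : ∀ L : List (Fin (2 * l)),
      (1 : ℂ) ⊗ₜ[ℝ] (L.map (fun i => CliffordAlgebra.ι Q (e i))).prod = (L.map g).prod := by
    intro L
    induction L with
    | nil => simp [Algebra.TensorProduct.one_def]
    | cons j L ih =>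
      rw [List.map_cons, List.prod_cons, List.map_cons, List.prod_cons, ← ih]
      simp [hg, Algebra.TensorProduct.tmul_mul_tmul]
  -- trace vanishing under anticommutation with a generator
  have tr0 : ∀ (a : ℂ ⊗[ℝ] CliffordAlgebra Q) (i : Fin (2 * l)),
      g i * a = -(a * g i) → LinearMap.trace ℂ S (ρ a) = 0 := by
    intro a i h
    have h2 : g i * (a * g i) = a := by
      rw [← massoc, h, nmul, massoc, gsq i, mn1, neg_neg]
    have e4 : (a * g i) * g i = -a := by
      rw [massoc, gsq i, mn1]
    have h3 : LinearMap.trace ℂ S (ρ a) = - LinearMap.trace ℂ S (ρ a) := by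
      calc LinearMap.trace ℂ S (ρ a)
          = LinearMap.trace ℂ S (ρ (g i * (a * g i))) := by rw [h2]
        _ = LinearMap.trace ℂ S (ρ (g i) * ρ (a * g i)) := by rw [map_mul ρ (g i) (a * g i)]
        _ = LinearMap.trace ℂ S (ρ (a * g i) * ρ (g i)) := by rw [LinearMap.trace_mul_comm]
        _ = LinearMap.trace ℂ S (ρ ((a * g i) * g i)) := by rw [map_mul ρ (a * g i) (g i)]
        _ = LinearMap.trace ℂ S (ρ (-a)) := by rw [e4]
        _ = - LinearMap.trace ℂ S (ρ a) := by rw [map_neg, map_neg]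
    linear_combination h3 / 2
  -- counting: countP (≠ i) + count i = length
  have hcount : ∀ (i : Fin (2 * l)) (M : List (Fin (2 * l))),
      M.countP (fun j => decide (j ≠ i)) + M.count i = M.length := by
    intro i M
    induction M with
    | nil => simp
    | cons a M ih =>
      by_cases h : a = i
      · subst h
        rw [List.countP_cons_of_neg (p := fun k => decide (k ≠ a)) (a := a) (l := M) (by simp), List.count_cons_self, List.length_cons]
        omega
      · rw [List.countP_cons_of_pos (p := fun k => decide (k ≠ i)) (a := a) (l := M) (by simp [h]), List.length_cons]
        have hc : (a :: M).count i = M.count i := by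
          simp only [List.count_cons, beq_iff_eq, if_neg h, add_zero]
        rw [hc]
        omega
  -- square of a nodup product
  have sqlem : ∀ L : List (Fin (2 * l)), L.Nodup →
      (L.map g).prod * (L.map g).prod
        = ((-1 : ℂ) ^ (L.length * (L.length + 1) / 2)) • 1 := by
    intro L hL
    induction L with
    | nil => simp
    | cons j L ih =>
      rw [List.nodup_cons] at hL
      obtain ⟨hj, hL⟩ := hL
      have hcomm : g j * (L.map g).prod = ((-1 : ℂ) ^ L.length) • ((L.map g).prod * g j) := by
        rw [comm j L, List.countP_eq_length.mpr (fun a ha => by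
          simp only [decide_eq_true_eq]
          exact fun hh => hj (hh ▸ ha))]
      have hcomm' : (L.map g).prod * g j = ((-1 : ℂ) ^ L.length) • (g j * (L.map g).prod) := by
        rw [hcomm, ssmul, ← pow_add, Even.neg_one_pow ⟨_, rfl⟩, osmul]
      have hexp : (L.length + 1) * (L.length + 1 + 1) / 2
          = (L.length + 1) + L.length * (L.length + 1) / 2 := by
        have h1 : (L.length + 1) * (L.length + 1 + 1)
            = L.length * (L.length + 1) + 2 * (L.length + 1) := by ring
        have h2 : 2 ∣ L.length * (L.length + 1) := (Nat.even_mul_succ_self L.length).two_dvd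
        omega
      rw [List.map_cons, List.prod_cons, List.length_cons, hexp]
      calc (g j * (L.map g).prod) * (g j * (L.map g).prod)
          = g j * (((L.map g).prod * g j) * (L.map g).prod) := by
            rw [massoc, ← massoc (L.map g).prod]
        _ = g j * ((((-1 : ℂ) ^ L.length) • (g j * (L.map g).prod)) * (L.map g).prod) := by
            rw [hcomm']
        _ = ((-1 : ℂ) ^ L.length) • ((g j * g j) * ((L.map g).prod * (L.map g).prod)) := by
            rw [smulmul, mulsmul, ← massoc (g j) (g j * (L.map g).prod) (L.map g).prod,
              ← massoc (g j) (g j) (L.map g).prod, massoc (g j * g j) (L.map g).prod (L.map g).prod]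
        _ = ((-1 : ℂ) ^ (L.length + 1 + L.length * (L.length + 1) / 2)) • 1 := by
            rw [gsq j, nm1, ih hL, smneg, ← negsmul, ssmul]
            congr 1
            rw [pow_add, pow_add, pow_one]
            ring
  -- the top product
  have htop : (1 : ℂ) ⊗ₜ[ℝ] (List.ofFn fun i => CliffordAlgebra.ι Q (e i)).prod
      = ((List.finRange (2 * l)).map g).prod := by
    rw [show (List.ofFn fun i => CliffordAlgebra.ι Q (e i))
        = (List.finRange (2 * l)).map (fun i => CliffordAlgebra.ι Q (e i)) from
      List.ofFn_eq_map]
    exact tmulProd _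
  constructor
  · -- vanishing for k < 2l
    intro k f hf hk
    set Lf : List (Fin (2 * l)) := (List.finRange k).map f with hLf
    have hm : (1 : ℂ) ⊗ₜ[ℝ] (List.ofFn fun j => CliffordAlgebra.ι Q (e (f j))).prod
        = (Lf.map g).prod := by
      rw [show (List.ofFn fun j => CliffordAlgebra.ι Q (e (f j)))
          = Lf.map (fun i => CliffordAlgebra.ι Q (e i)) by
        rw [hLf, List.map_map]; exact List.ofFn_eq_map]
      exact tmulProd _
    set L : List (Fin (2 * l)) := List.finRange (2 * l) ++ Lf with hL
    have hΓm : Γ * ((1 : ℂ) ⊗ₜ[ℝ] (List.ofFn fun j => CliffordAlgebra.ι Q (e (f j))).prod)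
        = (Complex.I ^ l) • (L.map g).prod := by
      rw [hΓ, htop, hm, smulmul, hL, List.map_append, List.prod_append]
    have hLfnd : Lf.Nodup := (List.nodup_finRange k).map hf.injective
    have hLflen : Lf.length = k := by simp [hLf]
    obtain ⟨i, hodd⟩ : ∃ i : Fin (2 * l),
        Odd (L.countP (fun j => decide (j ≠ i))) := by
      have hfullc : ∀ i : Fin (2 * l),
          (List.finRange (2 * l)).countP (fun j => decide (j ≠ i)) + 1 = 2 * l := by
        intro i
        have h := hcount i (List.finRange (2 * l))
        rwa [List.count_eq_one_of_mem (List.nodup_finRange _) (List.mem_finRange i),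
          List.length_finRange] at h
      rcases Nat.even_or_odd k with hk2 | hk2
      · -- k even : pick i outside the range of f
        have hns : ¬ Function.Surjective f := by
          intro hsurj
          have hcard := Fintype.card_le_of_surjective f hsurj
          simp only [Fintype.card_fin] at hcard
          omega
        obtain ⟨i, hi⟩ : ∃ i : Fin (2 * l), ∀ j, f j ≠ i := by
          by_contra hcon
          push_neg at hcon
          exact hns fun b => hcon b
        refine ⟨i, ?_⟩
        have hnotmem : i ∉ Lf := by
          simp only [hLf, List.mem_map]
          rintro ⟨j, -, hj⟩
          exact hi j hj
        have hLfc : Lf.countP (fun j => decide (j ≠ i)) = k := by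
          have h := hcount i Lf
          rwa [List.count_eq_zero_of_not_mem hnotmem, hLflen, add_zero] at h
        rw [hL, List.countP_append, hLfc]
        have h := hfullc i
        rw [Nat.odd_iff]
        rw [Nat.even_iff] at hk2
        omega
      · -- k odd : pick i in the range of f
        have hkpos : 0 < k := hk2.pos
        refine ⟨f ⟨0, hkpos⟩, ?_⟩
        have hmem : f ⟨0, hkpos⟩ ∈ Lf := by
          simp only [hLf, List.mem_map]
          exact ⟨⟨0, hkpos⟩, List.mem_finRange _, rfl⟩
        have hLfc : Lf.countP (fun j => decide (j ≠ f ⟨0, hkpos⟩)) + 1 = k := by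
          have h := hcount (f ⟨0, hkpos⟩) Lf
          rwa [List.count_eq_one_of_mem hLfnd hmem, hLflen] at h
        rw [hL, List.countP_append]
        have h := hfullc (f ⟨0, hkpos⟩)
        rw [Nat.odd_iff]
        rw [Nat.odd_iff] at hk2
        omega
    have hanti : g i * (Γ * ((1 : ℂ) ⊗ₜ[ℝ] (List.ofFn fun j =>
          CliffordAlgebra.ι Q (e (f j))).prod))
        = -((Γ * ((1 : ℂ) ⊗ₜ[ℝ] (List.ofFn fun j =>
          CliffordAlgebra.ι Q (e (f j))).prod)) * g i) := by
      rw [hΓm, mulsmul, comm i L, hodd.neg_one_pow, nsmul1, smneg, ← smulmul]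
    rw [hStr]
    exact tr0 _ i hanti
  · -- the top monomial
    have hexp2 : 2 * l * (2 * l + 1) / 2 = l * (2 * l + 1) := by
      have h : 2 * l * (2 * l + 1) = 2 * (l * (2 * l + 1)) := by ring
      omega
    rw [hStr, hΓ, htop, smulmul,
      sqlem (List.finRange (2 * l)) (List.nodup_finRange _), List.length_finRange, hexp2,
      ssmul, map_smul, map_one, map_smul, LinearMap.trace_one, hS]
    have h1 : ((-1 : ℂ)) ^ (l * (2 * l + 1)) = (-1 : ℂ) ^ l := by
      rw [show l * (2 * l + 1) = l + 2 * (l * l) by ring, pow_add, pow_mul, neg_one_sq,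
        one_pow, mul_one]
    rw [smul_eq_mul, h1,
      show ((-2 : ℂ) * Complex.I) = Complex.I * (-1) * 2 by ring, mul_pow, mul_pow]
    push_cast
    ring
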